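/- arXiv:1312.0338 — 5 statements merged into one kernel-verified Lean document; each statement's English description precedes it below -/
import Mathlib

section
/- Let k be a normed field and let E, F, F' be non-Archimedean seminormed spaces over k. Let u : E → F be a surjective linear map and C > 0 a constant such that for every f ∈ F and every ε > 0 there exists e ∈ E with u(e) = f and ‖e‖ ≤ C·‖f‖ + ε (i.e. u is a strict epimorphism). Let v : F' → F be a linear map and D ≥ 0 a constant with ‖v(x)‖ ≤ D·‖x‖ for all x ∈ F'. Then for every f' ∈ F' and every ε > 0 there exists e ∈ E with u(e) = v(f') and max(‖e‖, ‖f'‖) ≤ max(C·D, 1)·‖f'‖ + ε. (This shows that the projection from the fibre product E ×_F F', equipped with the norm max(‖e‖, ‖f'‖), onto F' is again a strict epimorphism; it is the key estimate in the paper's proof that the category of non-Archimedean Banach spaces is quasi-abelian.) -/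
/-- If `u : E → F` is a strict epimorphism of non-Archimedean seminormed spaces
(surjective, with `inf{‖e‖ : u e = f} ≤ C·‖f‖` expressed via the ε-characterisation)
and `v : F' → F` is bounded with constant `D`, then for every `f' ∈ F'` and `ε > 0`
there is `e ∈ E` with `u e = v f'` and `max(‖e‖, ‖f'‖) ≤ max(C·D, 1)·‖f'‖ + ε`.
This shows that the projection of the fibre product `E ×_F F'` (with the max norm)
onto `F'` is again a strict epimorphism. -/
theorem strict_epi_base_change_nonarch {k E F F' : Type*} [NormedField k]
    [SeminormedAddCommGroup E] [NormedSpace k E] [IsUltrametricDist E]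
    [SeminormedAddCommGroup F] [NormedSpace k F] [IsUltrametricDist F]
    [SeminormedAddCommGroup F'] [NormedSpace k F'] [IsUltrametricDist F']
    (u : E →ₗ[k] F) (hsurj : Function.Surjective u)
    (C : ℝ) (hC : 0 < C)
    (hu : ∀ f : F, ∀ ε > (0 : ℝ), ∃ e : E, u e = f ∧ ‖e‖ ≤ C * ‖f‖ + ε)
    (v : F' →ₗ[k] F) (D : ℝ) (hD : 0 ≤ D) (hv : ∀ x : F', ‖v x‖ ≤ D * ‖x‖) :
    ∀ f' : F', ∀ ε > (0 : ℝ), ∃ e : E, u e = v f' ∧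
      max ‖e‖ ‖f'‖ ≤ max (C * D) 1 * ‖f'‖ + ε := by
  intro f' ε hε
  obtain ⟨e, he, hne⟩ := hu (v f') ε hε
  refine ⟨e, he, max_le ?_ ?_⟩
  · calc ‖e‖ ≤ C * ‖v f'‖ + ε := hne
    _ ≤ C * (D * ‖f'‖) + ε := by
        have := hv f'
        nlinarith [norm_nonneg (v f')]
    _ ≤ max (C * D) 1 * ‖f'‖ + ε := by
        have : C * D ≤ max (C * D) 1 := le_max_left _ _
        nlinarith [norm_nonneg f']
  · have h1 : (1:ℝ) ≤ max (C * D) 1 := le_max_right _ _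
    nlinarith [norm_nonneg f']
end

section
/- Let k be a normed field and let E, E', F be non-Archimedean seminormed spaces over k. Let u : E → F be a linear map and C > 0 a constant with ‖e‖ ≤ C·‖u(e)‖ for all e ∈ E (i.e. u is a strict monomorphism), and let v : E → E' be a linear map with ‖v(e)‖ ≤ D·‖e‖ for all e ∈ E, where D ≥ 0. Then for every e' ∈ E' and every e ∈ E one has ‖e'‖ ≤ max(C·D, 1)·max(‖e' + v(e)‖, ‖u(e)‖). (This estimate shows that in the pushout (E' ⊕ F)/im(v, −u), equipped with the quotient of the max norm, the canonical map from E' is again a strict monomorphism; it is the key estimate in the paper's proof that the category of non-Archimedean Banach spaces is quasi-abelian.) -/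
/-- If `u : E → F` is a strict monomorphism of non-Archimedean seminormed spaces
(`‖e‖ ≤ C·‖u e‖` with `C > 0`) and `v : E → E'` is bounded with constant `D ≥ 0`,
then for all `e' ∈ E'` and `e ∈ E` we have
`‖e'‖ ≤ max(C·D, 1)·max(‖e' + v e‖, ‖u e‖)`.
This shows that in the pushout `(E' ⊕ F)/im(v, −u)` with the quotient of the max norm,
the canonical map from `E'` is again a strict monomorphism. -/
theorem strict_mono_pushout_nonarch {k E E' F : Type*} [NormedField k]
    [SeminormedAddCommGroup E] [NormedSpace k E] [IsUltrametricDist E]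
    [SeminormedAddCommGroup E'] [NormedSpace k E'] [IsUltrametricDist E']
    [SeminormedAddCommGroup F] [NormedSpace k F] [IsUltrametricDist F]
    (u : E →ₗ[k] F) (C : ℝ) (hC : 0 < C) (hu : ∀ e : E, ‖e‖ ≤ C * ‖u e‖)
    (v : E →ₗ[k] E') (D : ℝ) (hD : 0 ≤ D) (hv : ∀ e : E, ‖v e‖ ≤ D * ‖e‖) :
    ∀ (e' : E') (e : E), ‖e'‖ ≤ max (C * D) 1 * max ‖e' + v e‖ ‖u e‖ := by
  intro e' e
  have h1 : ‖e'‖ ≤ max ‖e' + v e‖ ‖v e‖ := by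
    calc ‖e'‖ = ‖(e' + v e) + (-(v e))‖ := by rw [add_neg_cancel_right]
    _ ≤ max ‖e' + v e‖ ‖-(v e)‖ := IsUltrametricDist.norm_add_le_max _ _
    _ = max ‖e' + v e‖ ‖v e‖ := by rw [norm_neg]
  have h2 : ‖v e‖ ≤ C * D * ‖u e‖ := by
    calc ‖v e‖ ≤ D * ‖e‖ := hv e
    _ ≤ D * (C * ‖u e‖) := by
        exact mul_le_mul_of_nonneg_left (hu e) hD
    _ = C * D * ‖u e‖ := by ring
  have hM : (1 : ℝ) ≤ max (C * D) 1 := le_max_right _ _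
  have hM2 : C * D ≤ max (C * D) 1 := le_max_left _ _
  refine h1.trans (max_le ?_ ?_)
  · calc ‖e' + v e‖ ≤ max (C * D) 1 * ‖e' + v e‖ :=
        le_mul_of_one_le_left (norm_nonneg _) hM
    _ ≤ max (C * D) 1 * max ‖e' + v e‖ ‖u e‖ := by
        apply mul_le_mul_of_nonneg_left (le_max_left _ _) (le_trans zero_le_one hM)
  · calc ‖v e‖ ≤ C * D * ‖u e‖ := h2
    _ ≤ max (C * D) 1 * max ‖e' + v e‖ ‖u e‖ :=
        mul_le_mul hM2 (le_max_right _ _) (norm_nonneg _) (le_trans zero_le_one hM)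
end

section
/- Let R be a commutative Noetherian ring and let f ∈ R. Then X − f (that is, PowerSeries.X − PowerSeries.C f) is a non-zero-divisor in the formal power series ring R⟦X⟧: if g ∈ R⟦X⟧ satisfies (X − f)·g = 0, then g = 0. -/
/-- Over a commutative Noetherian ring `R`, for any `f ∈ R` the element `X - C f`
is a non-zero-divisor in the formal power series ring `R⟦X⟧`. -/
theorem X_sub_C_nonZeroDivisor_powerSeries {R : Type*} [CommRing R] [IsNoetherianRing R]
    (f : R) (g : PowerSeries R)
    (h : (PowerSeries.X - PowerSeries.C f) * g = 0) : g = 0 := by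
  -- coefficient relations
  have h0 : f * PowerSeries.coeff 0 g = 0 := by
    have := congrArg (PowerSeries.coeff 0) h
    simpa [sub_mul, sub_eq_zero] using this
  have hrec : ∀ n : ℕ, PowerSeries.coeff n g = f * PowerSeries.coeff (n + 1) g := by
    intro n
    have := congrArg (PowerSeries.coeff (n + 1)) h
    simpa [sub_mul, sub_eq_zero, PowerSeries.coeff_succ_X_mul] using this
  -- g_n = f^k * g_{n+k}
  have hshift : ∀ n k : ℕ,
      PowerSeries.coeff n g = f ^ k * PowerSeries.coeff (n + k) g := by
    intro n k
    induction k with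
    | zero => simp
    | succ k ih =>
      rw [ih, hrec (n + k), pow_succ, ← Nat.add_assoc]
      ring
  -- f^{n+1} * g_n = 0
  have hann : ∀ n : ℕ, f ^ (n + 1) * PowerSeries.coeff n g = 0 := by
    intro n
    induction n with
    | zero => simpa using h0
    | succ n ih =>
      have := hrec n
      have : f ^ (n + 1) * (f * PowerSeries.coeff (n + 1) g) = 0 := by
        rw [← this]; exact ih
      calc f ^ (n + 1 + 1) * PowerSeries.coeff (n + 1) g
          = f ^ (n + 1) * (f * PowerSeries.coeff (n + 1) g) := by ring
        _ = 0 := this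
  -- kernel chain stabilizes
  let K : ℕ →o Submodule R R :=
    ⟨fun k => LinearMap.ker (LinearMap.mul R R (f ^ k)),
     fun a b hab x hx => by
      simp only [LinearMap.mem_ker, LinearMap.mul_apply_apply] at hx ⊢
      obtain ⟨c, rfl⟩ := Nat.exists_eq_add_of_le hab
      rw [pow_add]
      calc f ^ a * f ^ c * x = f ^ c * (f ^ a * x) := by ring
        _ = 0 := by rw [hx, mul_zero]⟩
  obtain ⟨N, hN⟩ := monotone_stabilizes_iff_noetherian.mpr
    (inferInstance : IsNoetherian R R) K
  ext n
  rw [map_zero]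
  have h1 : f ^ (n + N + 1) * PowerSeries.coeff (n + N) g = 0 := hann (n + N)
  have hmem : PowerSeries.coeff (n + N) g ∈ K (n + N + 1) := by
    exact h1
  rw [← hN (n + N + 1) (by omega)] at hmem
  have h2 : f ^ N * PowerSeries.coeff (n + N) g = 0 := by
    exact hmem
  rw [hshift n N, h2]
end

section
/- Let 𝕜 be a nontrivially normed field, let E, V, W be seminormed spaces over 𝕜, and let p : E → V be a surjective linear map such that for some constant C ≥ 0, for every v ∈ V and every ε > 0 there exists e ∈ E with p(e) = v and ‖e‖ ≤ C·‖v‖ + ε. Then for every element u of the algebraic tensor product V ⊗[𝕜] W and every ε > 0 there exists t ∈ E ⊗[𝕜] W with (p ⊗ id_W)(t) = u and projectiveSeminorm(t) ≤ C·projectiveSeminorm(u) + ε. (Hence tensoring with W sends strict epimorphisms of seminormed spaces to strict epimorphisms for the projective tensor seminorm.) -/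
open scoped TensorProduct

/-- The projective tensor seminorm on the algebraic tensor product `E ⊗[𝕜] F` of two
seminormed spaces: the infimum of `Σᵢ ‖eᵢ‖·‖fᵢ‖` over all finite representations
`u = Σᵢ eᵢ ⊗ fᵢ`. -/
noncomputable def projectiveSeminorm₂ (𝕜 : Type*) {E F : Type*} [NontriviallyNormedField 𝕜]
    [SeminormedAddCommGroup E] [NormedSpace 𝕜 E]
    [SeminormedAddCommGroup F] [NormedSpace 𝕜 F] (u : E ⊗[𝕜] F) : ℝ :=
  sInf {r : ℝ | ∃ l : List (E × F),
    u = (l.map fun p => p.1 ⊗ₜ[𝕜] p.2).sum ∧ r = (l.map fun p => ‖p.1‖ * ‖p.2‖).sum}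

lemma exists_rep₂ {𝕜 E F : Type*} [NontriviallyNormedField 𝕜]
    [SeminormedAddCommGroup E] [NormedSpace 𝕜 E]
    [SeminormedAddCommGroup F] [NormedSpace 𝕜 F] (u : E ⊗[𝕜] F) :
    ∃ l : List (E × F), u = (l.map fun p => p.1 ⊗ₜ[𝕜] p.2).sum := by
  induction u using TensorProduct.induction_on with
  | zero => exact ⟨[], rfl⟩
  | tmul e f => exact ⟨[(e, f)], by simp⟩
  | add x y hx hy =>
    obtain ⟨l₁, h₁⟩ := hx
    obtain ⟨l₂, h₂⟩ := hy
    exact ⟨l₁ ++ l₂, by simp [h₁, h₂]⟩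

lemma repSet_nonempty {𝕜 E F : Type*} [NontriviallyNormedField 𝕜]
    [SeminormedAddCommGroup E] [NormedSpace 𝕜 E]
    [SeminormedAddCommGroup F] [NormedSpace 𝕜 F] (u : E ⊗[𝕜] F) :
    {r : ℝ | ∃ l : List (E × F),
      u = (l.map fun p => p.1 ⊗ₜ[𝕜] p.2).sum ∧
      r = (l.map fun p => ‖p.1‖ * ‖p.2‖).sum}.Nonempty := by
  obtain ⟨l, hl⟩ := exists_rep₂ u
  exact ⟨_, l, hl, rfl⟩

lemma repSet_bddBelow {𝕜 E F : Type*} [NontriviallyNormedField 𝕜]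
    [SeminormedAddCommGroup E] [NormedSpace 𝕜 E]
    [SeminormedAddCommGroup F] [NormedSpace 𝕜 F] (u : E ⊗[𝕜] F) :
    BddBelow {r : ℝ | ∃ l : List (E × F),
      u = (l.map fun p => p.1 ⊗ₜ[𝕜] p.2).sum ∧
      r = (l.map fun p => ‖p.1‖ * ‖p.2‖).sum} := by
  refine ⟨0, fun r hr => ?_⟩
  obtain ⟨l, -, hr⟩ := hr
  subst hr
  apply List.sum_nonneg
  intro x hx
  simp only [List.mem_map] at hx
  obtain ⟨q, -, rfl⟩ := hx
  positivity

lemma projectiveSeminorm₂_le {𝕜 E F : Type*} [NontriviallyNormedField 𝕜]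
    [SeminormedAddCommGroup E] [NormedSpace 𝕜 E]
    [SeminormedAddCommGroup F] [NormedSpace 𝕜 F] {u : E ⊗[𝕜] F}
    (l : List (E × F)) (hl : u = (l.map fun p => p.1 ⊗ₜ[𝕜] p.2).sum) :
    projectiveSeminorm₂ 𝕜 u ≤ (l.map fun p => ‖p.1‖ * ‖p.2‖).sum :=
  csInf_le (repSet_bddBelow u) ⟨l, hl, rfl⟩

lemma lift_list {𝕜 E V W : Type*} [NontriviallyNormedField 𝕜]
    [SeminormedAddCommGroup E] [NormedSpace 𝕜 E]
    [SeminormedAddCommGroup V] [NormedSpace 𝕜 V]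
    [SeminormedAddCommGroup W] [NormedSpace 𝕜 W]
    (p : E →ₗ[𝕜] V) (C : ℝ)
    (hp : ∀ v : V, ∀ ε > (0 : ℝ), ∃ e : E, p e = v ∧ ‖e‖ ≤ C * ‖v‖ + ε)
    (δ : ℝ) (hδ : 0 < δ) :
    ∀ l : List (V × W), ∃ l' : List (E × W),
      LinearMap.rTensor W p (l'.map fun q => q.1 ⊗ₜ[𝕜] q.2).sum
        = (l.map fun q => q.1 ⊗ₜ[𝕜] q.2).sum ∧
      (l'.map fun q => ‖q.1‖ * ‖q.2‖).sum
        ≤ C * (l.map fun q => ‖q.1‖ * ‖q.2‖).sum + l.length * δ := by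
  intro l
  induction l with
  | nil => exact ⟨[], by simp⟩
  | cons vw l ih =>
    obtain ⟨l', hl'₁, hl'₂⟩ := ih
    obtain ⟨v, w⟩ := vw
    have hw : (0 : ℝ) < ‖w‖ + 1 := by positivity
    obtain ⟨e, he, hen⟩ := hp v (δ / (‖w‖ + 1)) (by positivity)
    refine ⟨(e, w) :: l', ?_, ?_⟩
    · simp [hl'₁, he]
    · simp only [List.map_cons, List.sum_cons, List.length_cons]
      have h1 : ‖e‖ * ‖w‖ ≤ C * (‖v‖ * ‖w‖) + δ := by
        have h2 : ‖e‖ * ‖w‖ ≤ (C * ‖v‖ + δ / (‖w‖ + 1)) * ‖w‖ :=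
          mul_le_mul_of_nonneg_right hen (norm_nonneg w)
        have h3 : δ / (‖w‖ + 1) * ‖w‖ ≤ δ := by
          rw [div_mul_eq_mul_div, div_le_iff₀ hw]
          nlinarith [norm_nonneg w]
        nlinarith
      push_cast
      nlinarith

/-- If `p : E → V` is a strict epimorphism of seminormed spaces (surjective, with
`inf{‖e‖ : p e = v} ≤ C·‖v‖` expressed via the ε-characterisation), then for every
`u ∈ V ⊗[𝕜] W` and every `ε > 0` there is `t ∈ E ⊗[𝕜] W` with `(p ⊗ id_W) t = u` and
`projectiveSeminorm t ≤ C·projectiveSeminorm u + ε`; i.e. tensoring with `W` sends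
strict epimorphisms to strict epimorphisms for the projective tensor seminorm. -/
theorem rTensor_strict_epi {𝕜 E V W : Type*} [NontriviallyNormedField 𝕜]
    [SeminormedAddCommGroup E] [NormedSpace 𝕜 E]
    [SeminormedAddCommGroup V] [NormedSpace 𝕜 V]
    [SeminormedAddCommGroup W] [NormedSpace 𝕜 W]
    (p : E →ₗ[𝕜] V) (hsurj : Function.Surjective p)
    (C : ℝ) (hC : 0 ≤ C)
    (hp : ∀ v : V, ∀ ε > (0 : ℝ), ∃ e : E, p e = v ∧ ‖e‖ ≤ C * ‖v‖ + ε) :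
    ∀ u : V ⊗[𝕜] W, ∀ ε > (0 : ℝ), ∃ t : E ⊗[𝕜] W,
      LinearMap.rTensor W p t = u ∧
      projectiveSeminorm₂ 𝕜 t ≤ C * projectiveSeminorm₂ 𝕜 u + ε := by
  intro u ε hε
  have hC1 : (0 : ℝ) < C + 1 := by positivity
  obtain ⟨S, ⟨l, hl, rfl⟩, hS⟩ :=
    Real.lt_sInf_add_pos (repSet_nonempty u) (show (0:ℝ) < ε / (2 * (C + 1)) by positivity)
  set n := l.length with hn
  obtain ⟨l', h1, h2⟩ := lift_list p C hp (ε / (2 * (n + 1)))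
    (by positivity) l
  refine ⟨(l'.map fun q => q.1 ⊗ₜ[𝕜] q.2).sum, by rw [h1, hl], ?_⟩
  have hP := projectiveSeminorm₂_le (u := ((l'.map fun q => q.1 ⊗ₜ[𝕜] q.2).sum : E ⊗[𝕜] W)) l' rfl
  have hsum : (n : ℝ) * (ε / (2 * (n + 1))) ≤ ε / 2 := by
    have hnn : (0:ℝ) ≤ (n : ℝ) := Nat.cast_nonneg n
    rw [mul_div_assoc', div_le_div_iff₀ (by positivity) (by norm_num : (0:ℝ) < 2)]
    nlinarith
  have hCS : C * (l.map fun q => ‖q.1‖ * ‖q.2‖).sum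
      ≤ C * projectiveSeminorm₂ 𝕜 u + ε / 2 := by
    have : C * (l.map fun q => ‖q.1‖ * ‖q.2‖).sum
        ≤ C * (projectiveSeminorm₂ 𝕜 u + ε / (2 * (C + 1))) :=
      mul_le_mul_of_nonneg_left (le_of_lt hS) hC
    have hce : C * (ε / (2 * (C + 1))) ≤ ε / 2 := by
      rw [mul_div_assoc']
      rw [div_le_div_iff₀ (by positivity) (by norm_num : (0:ℝ) < 2)]
      nlinarith
    nlinarith
  calc projectiveSeminorm₂ 𝕜 ((l'.map fun q => q.1 ⊗ₜ[𝕜] q.2).sum)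
      ≤ (l'.map fun q => ‖q.1‖ * ‖q.2‖).sum := hP
    _ ≤ C * (l.map fun q => ‖q.1‖ * ‖q.2‖).sum + n * (ε / (2 * (n + 1))) := h2
    _ ≤ C * projectiveSeminorm₂ 𝕜 u + ε / 2 + ε / 2 := by linarith
    _ = C * projectiveSeminorm₂ 𝕜 u + ε := by ring
end

section
/- Let 𝒜, ℬ, 𝒞, 𝒟 be categories having all finite limits, and let F : 𝒜 ⥤ ℬ, F' : 𝒞 ⥤ 𝒟, G : 𝒞 ⥤ 𝒜 and G' : 𝒟 ⥤ ℬ be functors such that G and G' preserve finite limits, G' is conservative, and there is a natural isomorphism G ⋙ F ≅ F' ⋙ G' of functors 𝒞 ⥤ ℬ. If F preserves finite limits, then F' preserves finite limits. -/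
open CategoryTheory CategoryTheory.Limits

/-- Let `F : 𝒜 ⥤ ℬ`, `F' : 𝒞 ⥤ 𝒟`, `G : 𝒞 ⥤ 𝒜`, `G' : 𝒟 ⥤ ℬ` between categories with
finite limits, where `G` and `G'` preserve finite limits, `G'` is conservative, and
`G ⋙ F ≅ F' ⋙ G'`. If `F` preserves finite limits then so does `F'`. -/
theorem preservesFiniteLimits_of_conservative_square
    {𝒜 ℬ 𝒞 𝒟 : Type*} [Category 𝒜] [Category ℬ] [Category 𝒞] [Category 𝒟]
    [HasFiniteLimits 𝒜] [HasFiniteLimits ℬ] [HasFiniteLimits 𝒞] [HasFiniteLimits 𝒟]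
    (F : 𝒜 ⥤ ℬ) (F' : 𝒞 ⥤ 𝒟) (G : 𝒞 ⥤ 𝒜) (G' : 𝒟 ⥤ ℬ)
    [PreservesFiniteLimits G] [PreservesFiniteLimits G']
    [G'.ReflectsIsomorphisms]
    (iso : G ⋙ F ≅ F' ⋙ G')
    [PreservesFiniteLimits F] :
    PreservesFiniteLimits F' := by
  haveI : PreservesFiniteLimits (F' ⋙ G') := by
    haveI : PreservesFiniteLimits (G ⋙ F) := comp_preservesFiniteLimits G F
    exact preservesFiniteLimits_of_natIso iso
  exact preservesFiniteLimits_of_reflects_of_preserves F' G'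
end
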